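/- arXiv:math/0206261 — 2 statements merged into one kernel-verified Lean document; each statement's English description precedes it below -/
import Mathlib

section
/- Let k → A be a ring homomorphism, D = (D_0, D_1, ...) a Hasse–Schmidt derivation of A over k, and S ⊆ A a multiplicatively closed subset. Then D extends uniquely to a Hasse–Schmidt derivation of the localization S^{-1}A over k, i.e. there is a unique Hasse–Schmidt derivation D' of S^{-1}A over k with D'_i ∘ ι = ι ∘ D_i for all i, where ι : A → S^{-1}A is the localization map. -/
open PowerSeries Finset

section aux
variable {k R : Type*} [CommRing k] [CommRing R] [Algebra k R]

theorem hs_aux_one (D : ℕ → (R →ₗ[k] R)) (hD0 : D 0 = LinearMap.id)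
    (hLeib : ∀ i, 0 < i → ∀ x y : R,
      D i (x * y) = ∑ p ∈ Finset.HasAntidiagonal.antidiagonal i, D p.1 x * D p.2 y)
    (i : ℕ) (hi : 0 < i) : D i 1 = 0 := by
  induction i using Nat.strong_induction_on with
  | _ i ih =>
  have h := hLeib i hi 1 1
  rw [mul_one] at h
  have hsub : ({((0:ℕ), i), (i, (0:ℕ))} : Finset (ℕ × ℕ)) ⊆ Finset.HasAntidiagonal.antidiagonal i := by
    intro p hp
    simp only [Finset.mem_insert, Finset.mem_singleton] at hp
    rcases hp with rfl | rfl <;> simp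
  rw [← Finset.sum_subset hsub ?hz] at h
  · have hne : ((0:ℕ), i) ≠ (i, (0:ℕ)) := by
      intro hc
      rw [Prod.mk.injEq] at hc
      omega
    rw [Finset.sum_insert (by simpa using hne), Finset.sum_singleton] at h
    simp only [hD0, LinearMap.id_coe, id_eq, one_mul, mul_one] at h
    linear_combination -h
  · intro p hp hpn
    simp only [Finset.HasAntidiagonal.mem_antidiagonal] at hp
    simp only [Finset.mem_insert, Finset.mem_singleton] at hpn
    push_neg at hpn
    have h1 : p.1 ≠ 0 := by
      intro h0
      exact hpn.1 (Prod.ext h0 (by omega))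
    have h2 : p.2 ≠ 0 := by
      intro h0
      exact hpn.2 (Prod.ext (by omega) h0)
    have : p.1 < i := by omega
    rw [ih p.1 this (Nat.pos_of_ne_zero h1), zero_mul]

/-- The ring hom `R → R⟦X⟧` attached to a Hasse–Schmidt derivation. -/
def hsRingHom (D : ℕ → (R →ₗ[k] R)) (hD0 : D 0 = LinearMap.id)
    (hLeib : ∀ i, 0 < i → ∀ x y : R,
      D i (x * y) = ∑ p ∈ Finset.HasAntidiagonal.antidiagonal i, D p.1 x * D p.2 y) :
    R →+* R⟦X⟧ where
  toFun x := PowerSeries.mk fun i => D i x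
  map_one' := by
    ext n
    rcases Nat.eq_zero_or_pos n with rfl | hn
    · simp [hD0]
    · simp [coeff_one, Nat.pos_iff_ne_zero.mp hn, hs_aux_one D hD0 hLeib n hn]
  map_mul' x y := by
    ext n
    rw [coeff_mk, PowerSeries.coeff_mul]
    rcases Nat.eq_zero_or_pos n with rfl | hn
    · simp [hD0]
    · rw [hLeib n hn x y]
      exact Finset.sum_congr rfl fun p _ => by rw [coeff_mk, coeff_mk]
  map_zero' := by ext n; simp
  map_add' x y := by ext n; simp

@[simp] theorem coeff_hsRingHom (D : ℕ → (R →ₗ[k] R)) (hD0 hLeib) (x : R) (n : ℕ) :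
    PowerSeries.coeff n (hsRingHom D hD0 hLeib x) = D n x := by
  simp [hsRingHom]

end aux

/-- a Hasse–Schmidt derivation of `A` over `k` extends uniquely to a
Hasse–Schmidt derivation of the localization `S⁻¹A` over `k`. -/
theorem hasseSchmidt_extends_to_localization
    {k A B : Type*} [CommRing k] [CommRing A] [CommRing B]
    [Algebra k A] [Algebra k B] [Algebra A B] [IsScalarTower k A B]
    (S : Submonoid A) [IsLocalization S B]
    (D : ℕ → (A →ₗ[k] A))
    (hD0 : D 0 = LinearMap.id)
    (hLeib : ∀ i, 0 < i → ∀ x y : A,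
      D i (x * y) = ∑ p ∈ Finset.HasAntidiagonal.antidiagonal i, D p.1 x * D p.2 y) :
    ∃! D' : ℕ → (B →ₗ[k] B),
      (D' 0 = LinearMap.id ∧
        ∀ i, 0 < i → ∀ x y : B,
          D' i (x * y) = ∑ p ∈ Finset.HasAntidiagonal.antidiagonal i, D' p.1 x * D' p.2 y) ∧
      ∀ i (x : A), D' i (algebraMap A B x) = algebraMap A B (D i x) := by
  classical
  -- the ring hom `A → B⟦X⟧`
  set g : A →+* B⟦X⟧ :=
    (PowerSeries.map (algebraMap A B)).comp (hsRingHom D hD0 hLeib) with hg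
  have hgcoeff : ∀ (x : A) (n : ℕ),
      PowerSeries.coeff n (g x) = algebraMap A B (D n x) := by
    intro x n
    simp [hg, PowerSeries.coeff_map]
  have hunits : ∀ s : S, IsUnit (g s) := by
    intro s
    rw [PowerSeries.isUnit_iff_constantCoeff]
    have : PowerSeries.constantCoeff (g s) = algebraMap A B (s : A) := by
      have := hgcoeff (s : A) 0
      simpa [hD0, PowerSeries.coeff_zero_eq_constantCoeff] using this
    rw [this]
    exact IsLocalization.map_units B s
  -- lift to `B`
  set L : B →+* B⟦X⟧ := IsLocalization.lift (M := S) (S := B) hunits with hL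
  have hLalg : ∀ x : A, L (algebraMap A B x) = g x := fun x =>
    IsLocalization.lift_eq hunits x
  -- `L` is `k`-linear
  have hLsmul : ∀ (c : k) (b : B), L (c • b) = c • L b := by
    intro c b
    have h1 : c • b = algebraMap A B (algebraMap k A c) * b := by
      rw [← IsScalarTower.algebraMap_apply, Algebra.smul_def]
    have h2 : g (algebraMap k A c) = PowerSeries.C (algebraMap k B c) := by
      ext n
      rcases Nat.eq_zero_or_pos n with rfl | hn
      · rw [hgcoeff]
        simp [hD0, PowerSeries.coeff_zero_C, ← IsScalarTower.algebraMap_apply]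
      · rw [hgcoeff]
        have : D n (algebraMap k A c) = 0 := by
          have := hs_aux_one D hD0 hLeib n hn
          rw [Algebra.algebraMap_eq_smul_one, map_smul, this, smul_zero]
        simp [this, PowerSeries.coeff_C, Nat.pos_iff_ne_zero.mp hn]
    rw [h1, map_mul, hLalg, h2, Algebra.smul_def, PowerSeries.algebraMap_apply]
  -- the candidate extension
  set D' : ℕ → (B →ₗ[k] B) := fun i =>
    { toFun := fun b => PowerSeries.coeff i (L b)
      map_add' := fun x y => by
        show PowerSeries.coeff i (L (x + y)) = _
        rw [map_add, map_add]
      map_smul' := fun c b => by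
        show PowerSeries.coeff i (L (c • b)) = _
        rw [hLsmul, RingHom.id_apply]
        exact PowerSeries.coeff_smul i (L b) c } with hD'
  have hD'apply : ∀ i (b : B), D' i b = PowerSeries.coeff i (L b) := fun _ _ => rfl
  have hcomp : ∀ i (x : A), D' i (algebraMap A B x) = algebraMap A B (D i x) := by
    intro i x
    rw [hD'apply, hLalg, hgcoeff]
  have hD'0 : D' 0 = LinearMap.id := by
    -- `constantCoeff ∘ L = id` by localization ext
    have : PowerSeries.constantCoeff.comp L = RingHom.id B := by
      apply IsLocalization.ringHom_ext S
      ext x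
      simp only [RingHom.comp_apply, RingHom.id_apply]
      rw [hLalg]
      have := hgcoeff x 0
      rw [PowerSeries.coeff_zero_eq_constantCoeff] at this
      rw [this, hD0]
      rfl
    ext b
    have h3 := RingHom.congr_fun this b
    simpa [hD'apply, PowerSeries.coeff_zero_eq_constantCoeff] using h3
  have hD'Leib : ∀ i, 0 < i → ∀ x y : B,
      D' i (x * y) = ∑ p ∈ Finset.HasAntidiagonal.antidiagonal i, D' p.1 x * D' p.2 y := by
    intro i _ x y
    simp only [hD'apply, map_mul, PowerSeries.coeff_mul]
  refine ⟨D', ⟨⟨hD'0, hD'Leib⟩, hcomp⟩, ?_⟩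
  -- uniqueness
  rintro E ⟨⟨hE0, hELeib⟩, hEcomp⟩
  have hEL : hsRingHom E hE0 hELeib = L := by
    apply IsLocalization.ringHom_ext S
    ext x n
    rw [RingHom.comp_apply, RingHom.comp_apply, hLalg, coeff_hsRingHom, hEcomp, hgcoeff]
  funext i
  ext b
  have : E i b = PowerSeries.coeff i ((hsRingHom E hE0 hELeib) b) := by
    rw [coeff_hsRingHom]
  rw [this, hEL, ← hD'apply]
end

section
/- Let (R, 𝔪, k) be a noetherian regular local ring of dimension n containing a field, with regular system of parameters X_1,...,X_n, quasi-coefficient field k_0 ⊆ R, and identify the completion R̂ = k[[X_1,...,X_n]]. If there exist k_0-derivations D_1,...,D_n of R and elements a_1,...,a_n ∈ R with det(D_i(a_j)) ∉ 𝔪, then Der_{k_0}(R) is a free R-module of rank n with basis {D_1,...,D_n}. -/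
set_option linter.unusedSectionVars false
set_option linter.unreachableTactic false
set_option linter.unusedTactic false

open IsLocalRing Ideal TrivSqZeroExt Matrix

universe u

section NomuraAux

variable {R k₀ : Type u} [CommRing R] [IsLocalRing R]
    [Field k₀] [Algebra k₀ R]
    [Algebra k₀ (ResidueField R)] [IsScalarTower k₀ R (ResidueField R)]

local notation "𝔪" => IsLocalRing.maximalIdeal R
local notation "k" => IsLocalRing.ResidueField R

noncomputable instance kModule' : Module k₀ k := Algebra.toModule

lemma residue_algebraMap' (l : k₀) :
    residue R (algebraMap k₀ R l) = algebraMap k₀ (ResidueField R) l := by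
  rw [IsScalarTower.algebraMap_apply k₀ R (ResidueField R)]
  rfl

lemma exists_section' [Algebra.FormallySmooth k₀ (ResidueField R)] (N : ℕ) :
    ∃ σ : ResidueField R →ₐ[k₀] R ⧸ (𝔪 ^ N),
      ∀ x : R, σ (residue R x) - Ideal.Quotient.mk (𝔪 ^ N) x
        ∈ (𝔪).map (Ideal.Quotient.mk (𝔪 ^ N)) := by
  set I : Ideal (R ⧸ 𝔪 ^ N) := (𝔪).map (Ideal.Quotient.mk (𝔪 ^ N)) with hI
  have hnil : IsNilpotent I := ⟨N, by rw [← Ideal.map_pow, Ideal.map_quotient_self]; rfl⟩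
  have h0 : ∀ x ∈ 𝔪, (Ideal.Quotient.mk I).comp (Ideal.Quotient.mk (𝔪 ^ N)) x = 0 := by
    intro x hx
    simp only [RingHom.comp_apply, Ideal.Quotient.eq_zero_iff_mem]
    exact Ideal.mem_map_of_mem _ hx
  let g : ResidueField R →ₐ[k₀] (R ⧸ 𝔪 ^ N) ⧸ I :=
    { toRingHom := Ideal.Quotient.lift 𝔪 _ h0
      commutes' := by
        intro l
        rw [← residue_algebraMap' l]
        show Ideal.Quotient.lift 𝔪 _ h0 (Ideal.Quotient.mk 𝔪 (algebraMap k₀ R l)) = _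
        rw [Ideal.Quotient.lift_mk, RingHom.comp_apply, Ideal.Quotient.mk_algebraMap,
          Ideal.Quotient.mk_algebraMap] }
  refine ⟨Algebra.FormallySmooth.lift I hnil g, fun x => ?_⟩
  have h1 : Ideal.Quotient.mk I (Algebra.FormallySmooth.lift I hnil g (residue R x))
      = g (residue R x) := Algebra.FormallySmooth.mk_lift I hnil g _
  have h2 : g (residue R x) = Ideal.Quotient.mk I (Ideal.Quotient.mk (𝔪 ^ N) x) := by
    show Ideal.Quotient.lift 𝔪 _ h0 (Ideal.Quotient.mk 𝔪 x) = _
    rw [Ideal.Quotient.lift_mk, RingHom.comp_apply]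
  rw [← Ideal.Quotient.eq, h1, h2]


lemma deriv_mem_of_mem_mul' (E : Derivation k₀ R R) {I J K : Ideal R}
    (h : ∀ m ∈ I, ∀ n ∈ J, m * E n + n * E m ∈ K) : ∀ x ∈ I * J, E x ∈ K := by
  intro x hx
  refine Submodule.mul_induction_on hx (fun m hm n hn => ?_) (fun x y hx hy => ?_)
  · have := E.leibniz m n
    rw [this]
    simpa [smul_eq_mul] using h m hm n hn
  · rw [map_add]; exact K.add_mem hx hy

/-- If `E` maps into `𝔪^m`, it maps `𝔪²` into `𝔪^(m+1)`. -/
lemma deriv_sq_mem' (E : Derivation k₀ R R) {m : ℕ} (hE : ∀ x, E x ∈ 𝔪 ^ m) :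
    ∀ x ∈ 𝔪 ^ 2, E x ∈ 𝔪 ^ (m + 1) := by
  intro x hx
  rw [pow_two] at hx
  refine deriv_mem_of_mem_mul' E (fun u hu v hv => Ideal.add_mem _ ?_ ?_) x hx <;>
  · rw [pow_succ, mul_comm]
    exact Ideal.mul_mem_mul ‹_› (hE _)

/-- If `E` maps into `𝔪^m` with `m ≥ 1`, it maps `𝔪^(m+1)` into `𝔪^(m+1)`. -/
lemma deriv_pow_succ_mem' (E : Derivation k₀ R R) {m : ℕ} (hm : 1 ≤ m)
    (hE : ∀ x, E x ∈ 𝔪 ^ m) : ∀ x ∈ 𝔪 ^ (m + 1), E x ∈ 𝔪 ^ (m + 1) := by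
  intro x hx
  rw [pow_succ] at hx
  refine deriv_mem_of_mem_mul' E (fun u hu v hv => Ideal.add_mem _ ?_ ?_) x hx
  · have h2 : (u : R) * E v ∈ 𝔪 ^ m * 𝔪 ^ m := Ideal.mul_mem_mul hu (hE v)
    rw [← pow_add] at h2
    exact Ideal.pow_le_pow_right (by omega) h2
  · have h3 : v * E u ∈ 𝔪 * 𝔪 ^ m := Ideal.mul_mem_mul hv (hE u)
    rwa [mul_comm, ← pow_succ] at h3


lemma map_sq_eq_bot' : ((𝔪).map (Ideal.Quotient.mk (𝔪 ^ 2))) ^ 2 = ⊥ := by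
  rw [← Ideal.map_pow, Ideal.map_quotient_self]

lemma mem_map_iff' {N : ℕ} {z : R ⧸ 𝔪 ^ N} :
    z ∈ (𝔪).map (Ideal.Quotient.mk (𝔪 ^ N)) ↔
      ∃ w ∈ 𝔪, Ideal.Quotient.mk (𝔪 ^ N) w = z := by
  rw [Ideal.mem_map_iff_of_surjective _ Ideal.Quotient.mk_surjective]

/-- From `mk s = σ c` we get `residue s = c`. -/
lemma residue_eq_of_section' (σ : ResidueField R →ₐ[k₀] R ⧸ (𝔪 ^ 2))
    (hσ : ∀ x : R, σ (residue R x) - Ideal.Quotient.mk (𝔪 ^ 2) x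
      ∈ (𝔪).map (Ideal.Quotient.mk (𝔪 ^ 2)))
    {s : R} {c : ResidueField R} (hs : Ideal.Quotient.mk (𝔪 ^ 2) s = σ c) :
    residue R s = c := by
  by_contra hne
  have hunit : IsUnit (residue R s - c) := by
    have : residue R s - c ≠ 0 := sub_ne_zero.mpr hne
    exact this.isUnit
  have hmem : σ (residue R s - c) ∈ (𝔪).map (Ideal.Quotient.mk (𝔪 ^ 2)) := by
    have := hσ s
    rwa [hs, ← map_sub] at this
  have htop : ((𝔪).map (Ideal.Quotient.mk (𝔪 ^ 2))) = ⊤ :=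
    Ideal.eq_top_of_isUnit_mem _ hmem (hunit.map σ)
  have h2 : ((⊤ : Ideal (R ⧸ 𝔪 ^ 2)) : Ideal _) ^ 2 = ⊥ := by
    rw [← htop]; exact map_sq_eq_bot'
  have hne2 : (𝔪 : Ideal R) ^ 2 ≠ ⊤ := by
    intro h
    exact (IsLocalRing.maximalIdeal.isMaximal R).ne_top
      (top_le_iff.mp (h ▸ Ideal.pow_le_self two_ne_zero))
  haveI : Nontrivial (R ⧸ 𝔪 ^ 2) := Ideal.Quotient.nontrivial_iff.mpr hne2
  rw [Ideal.top_pow] at h2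
  exact top_ne_bot h2


/-- The algebra hom `R → k[ε]`, `x ↦ (res x, res (E x))`. -/
noncomputable def psi0 (E : Derivation k₀ R R) : R →ₐ[k₀] TrivSqZeroExt k k where
  toFun x := inl (residue R x) + inr (residue R (E x))
  map_one' := by
    show inl ((residue R) 1) + inr ((residue R) (E 1)) = 1
    rw [E.map_one_eq_zero]
    simp
  map_mul' x y := by
    show inl ((residue R) (x * y)) + inr ((residue R) (E (x * y)))
      = (inl ((residue R) x) + inr ((residue R) (E x)))
        * (inl ((residue R) y) + inr ((residue R) (E y)))
    refine TrivSqZeroExt.ext ?_ ?_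
    · simp [fst_mul, _root_.map_mul]
    · simp only [snd_mul, snd_add, snd_inl, snd_inr, fst_add, fst_inl, fst_inr,
        E.leibniz, _root_.map_add, _root_.map_mul, zero_add, add_zero, smul_eq_mul,
        op_smul_eq_smul]
  map_zero' := by simp
  map_add' x y := by
    show inl ((residue R) (x + y)) + inr ((residue R) (E (x + y))) = _
    refine TrivSqZeroExt.ext ?_ ?_ <;>
      simp [_root_.map_add] <;> ring
  commutes' l := by
    show inl ((residue R) (algebraMap k₀ R l)) + inr ((residue R) (E (algebraMap k₀ R l)))
      = algebraMap k₀ (TrivSqZeroExt k k) l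
    rw [Derivation.map_algebraMap]
    simp only [map_zero, inr_zero, add_zero]
    rw [TrivSqZeroExt.algebraMap_eq_inl']
    congr 1
    rw [IsScalarTower.algebraMap_apply k₀ R k]
    rfl


lemma psi0_apply (E : Derivation k₀ R R) (x : R) :
    psi0 E x = inl (residue R x) + inr (residue R (E x)) := rfl

lemma psi0_ker (E : Derivation k₀ R R) : ∀ x ∈ (𝔪 : Ideal R) ^ 2, psi0 E x = 0 := by
  intro x hx
  have h1 : residue R x = 0 := by
    show Ideal.Quotient.mk 𝔪 x = 0
    rw [Ideal.Quotient.eq_zero_iff_mem]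
    exact Ideal.pow_le_self two_ne_zero hx
  have h2 : E x ∈ (𝔪 : Ideal R) := by
    rw [pow_two] at hx
    refine deriv_mem_of_mem_mul' E (fun u hu v hv => Ideal.add_mem _ ?_ ?_) x hx
    · exact Ideal.mul_mem_right _ _ hu
    · exact Ideal.mul_mem_right _ _ hv
  have h3 : residue R (E x) = 0 := by
    show Ideal.Quotient.mk 𝔪 (E x) = 0
    rw [Ideal.Quotient.eq_zero_iff_mem]
    exact h2
  rw [psi0_apply, h1, h3]
  simp

/-- Case `m = 0` of coefficient field vanishing: any `k₀`-derivation sends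
representatives of the coefficient field into `𝔪`. -/
lemma deriv_section_mem_zero' [Algebra.FormallyUnramified k₀ k]
    (E : Derivation k₀ R R)
    (σ : ResidueField R →ₐ[k₀] R ⧸ (𝔪 ^ 2))
    (hσ : ∀ x : R, σ (residue R x) - Ideal.Quotient.mk (𝔪 ^ 2) x
      ∈ (𝔪).map (Ideal.Quotient.mk (𝔪 ^ 2)))
    {s : R} {c : ResidueField R} (hs : Ideal.Quotient.mk (𝔪 ^ 2) s = σ c) :
    E s ∈ (𝔪 : Ideal R) := by
  classical
  -- the quotient algebra hom
  let ψ : (R ⧸ 𝔪 ^ 2) →ₐ[k₀] TrivSqZeroExt k k :=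
    Ideal.Quotient.liftₐ (𝔪 ^ 2) (psi0 E) (psi0_ker E)
  have hψ : ∀ x : R, ψ (Ideal.Quotient.mk (𝔪 ^ 2) x) = psi0 E x := by
    intro x
    rw [Ideal.Quotient.liftₐ_apply]
    rfl
  -- the square-zero ideal in k[ε]
  let I₀ : Ideal (TrivSqZeroExt k k) :=
    RingHom.ker (TrivSqZeroExt.fstHom k₀ k k).toRingHom
  have hI₀ : I₀ ^ 2 = ⊥ := by
    rw [pow_two]
    refine le_antisymm (Ideal.mul_le.mpr fun r hr t ht => ?_) bot_le
    have hr' : r.fst = 0 := hr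
    have ht' : t.fst = 0 := ht
    rw [Submodule.mem_bot]
    refine TrivSqZeroExt.ext ?_ ?_
    · rw [fst_mul, hr', zero_mul]; rfl
    · rw [snd_mul, hr', ht']
      simp
  -- two lifts of the identity
  have key : (Ideal.Quotient.mkₐ k₀ I₀).comp (ψ.comp σ)
      = (Ideal.Quotient.mkₐ k₀ I₀).comp
        ((TrivSqZeroExt.inlAlgHom k₀ k k : k →ₐ[k₀] TrivSqZeroExt k k)) := by
    apply AlgHom.ext
    intro d
    obtain ⟨x, rfl⟩ : ∃ x : R, residue R x = d := Ideal.Quotient.mk_surjective d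
    simp only [AlgHom.comp_apply, Ideal.Quotient.mkₐ_eq_mk]
    rw [Ideal.Quotient.eq]
    obtain ⟨w, hw, hw'⟩ := mem_map_iff'.mp (hσ x)
    have hxw : σ (residue R x) = Ideal.Quotient.mk (𝔪 ^ 2) (x + w) := by
      rw [map_add, hw']
      ring
    rw [hxw, hψ, psi0_apply]
    show _ ∈ RingHom.ker (TrivSqZeroExt.fstHom k₀ k k).toRingHom
    rw [RingHom.mem_ker]
    have hfst : (TrivSqZeroExt.fstHom k₀ k k).toRingHom
        (inl (residue R (x + w)) + inr (residue R (E (x + w))) - inlAlgHom k₀ k k (residue R x))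
        = residue R (x + w) - residue R x := by
      show TrivSqZeroExt.fst _ = _
      simp
    rw [hfst, _root_.map_add, add_sub_cancel_left]
    show Ideal.Quotient.mk 𝔪 w = 0
    rwa [Ideal.Quotient.eq_zero_iff_mem]
  have heq : ψ.comp σ = (TrivSqZeroExt.inlAlgHom k₀ k k : k →ₐ[k₀] TrivSqZeroExt k k) :=
    Algebra.FormallyUnramified.comp_injective I₀ hI₀ key
  have hc : ψ (σ c) = inl c := by
    rw [← AlgHom.comp_apply, heq]
    rfl
  rw [← hs, hψ, psi0_apply] at hc
  have hsnd := congrArg TrivSqZeroExt.snd hc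
  simp only [snd_add, snd_inl, snd_inr, zero_add] at hsnd
  have : residue R (E s) = 0 := hsnd
  show E s ∈ 𝔪
  rwa [← Ideal.Quotient.eq_zero_iff_mem]


/-- The algebra hom `R → R/𝔪^(m+1)`, `x ↦ x + E x`, for a derivation `E` mapping into
`𝔪^m`, `m ≥ 1`. -/
noncomputable def psi1 (E : Derivation k₀ R R) (m : ℕ) (hm : 1 ≤ m)
    (hE : ∀ x, E x ∈ 𝔪 ^ m) : R →ₐ[k₀] R ⧸ (𝔪 ^ (m + 1)) where
  toFun x := Ideal.Quotient.mk (𝔪 ^ (m + 1)) (x + E x)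
  map_one' := by
    show Ideal.Quotient.mk (𝔪 ^ (m + 1)) (1 + E 1) = 1
    rw [E.map_one_eq_zero, add_zero, _root_.map_one]
  map_mul' x y := by
    show Ideal.Quotient.mk _ (x * y + E (x * y)) = _
    rw [← _root_.map_mul, Ideal.Quotient.eq, E.leibniz]
    have h1 : x * y + (x • E y + y • E x) - (x + E x) * (y + E y) = -(E x * E y) := by
      simp only [smul_eq_mul]; ring
    rw [h1]
    refine neg_mem ?_
    have h2 : E x * E y ∈ 𝔪 ^ m * 𝔪 ^ m := Ideal.mul_mem_mul (hE x) (hE y)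
    rw [← pow_add] at h2
    exact Ideal.pow_le_pow_right (by omega) h2
  map_zero' := by
    show Ideal.Quotient.mk (𝔪 ^ (m + 1)) (0 + E 0) = 0
    rw [_root_.map_zero, add_zero, _root_.map_zero]
  map_add' x y := by
    show Ideal.Quotient.mk (𝔪 ^ (m + 1)) (x + y + E (x + y))
      = Ideal.Quotient.mk (𝔪 ^ (m + 1)) (x + E x) + Ideal.Quotient.mk (𝔪 ^ (m + 1)) (y + E y)
    rw [← _root_.map_add, E.map_add]
    ring_nf
  commutes' l := by
    show Ideal.Quotient.mk _ (algebraMap k₀ R l + E (algebraMap k₀ R l)) = _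
    rw [Derivation.map_algebraMap, add_zero, Ideal.Quotient.mk_algebraMap]

lemma psi1_apply (E : Derivation k₀ R R) (m : ℕ) (hm : 1 ≤ m) (hE : ∀ x, E x ∈ 𝔪 ^ m)
    (x : R) : psi1 E m hm hE x = Ideal.Quotient.mk (𝔪 ^ (m + 1)) (x + E x) := rfl

/-- Coefficient-field vanishing: if `E` maps into `𝔪^m` and `s` represents an element of
the coefficient field `σ(k) ⊆ R/𝔪²`, then `E s ∈ 𝔪^(m+1)`. -/
lemma deriv_section_mem' [Algebra.FormallyUnramified k₀ k] [Algebra.FormallySmooth k₀ k]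
    (E : Derivation k₀ R R) (m : ℕ) (hE : ∀ x, E x ∈ 𝔪 ^ m)
    (σ : k →ₐ[k₀] R ⧸ (𝔪 ^ 2))
    (hσ : ∀ x : R, σ (residue R x) - Ideal.Quotient.mk (𝔪 ^ 2) x
      ∈ (𝔪).map (Ideal.Quotient.mk (𝔪 ^ 2)))
    {s : R} {c : k} (hs : Ideal.Quotient.mk (𝔪 ^ 2) s = σ c) :
    E s ∈ (𝔪 : Ideal R) ^ (m + 1) := by
  rcases Nat.eq_zero_or_pos m with hm | hm
  · subst hm
    rw [pow_one]
    exact deriv_section_mem_zero' E σ hσ hs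
  -- now `m ≥ 1`
  obtain ⟨σ', hσ'⟩ := exists_section' (R := R) (k₀ := k₀) (m + 1)
  -- project `σ'` to level 2
  have hle : (𝔪 : Ideal R) ^ (m + 1) ≤ 𝔪 ^ 2 := Ideal.pow_le_pow_right (by omega)
  let πa : (R ⧸ 𝔪 ^ (m + 1)) →ₐ[k₀] R ⧸ (𝔪 ^ 2) :=
    { toRingHom := Ideal.Quotient.factor hle
      commutes' := by
        intro l
        rw [← Ideal.Quotient.mk_algebraMap, ← Ideal.Quotient.mk_algebraMap]
        exact Ideal.Quotient.factor_mk hle _ }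
  have hπa : ∀ x : R, πa (Ideal.Quotient.mk (𝔪 ^ (m + 1)) x)
      = Ideal.Quotient.mk (𝔪 ^ 2) x := fun x => Ideal.Quotient.factor_mk hle x
  have hσ'' : ∀ x : R, (πa.comp σ') (residue R x) - Ideal.Quotient.mk (𝔪 ^ 2) x
      ∈ (𝔪).map (Ideal.Quotient.mk (𝔪 ^ 2)) := by
    intro x
    obtain ⟨w, hw, hw'⟩ := mem_map_iff'.mp (hσ' x)
    have : σ' (residue R x) = Ideal.Quotient.mk (𝔪 ^ (m + 1)) (x + w) := by
      rw [map_add, hw']; ring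
    rw [AlgHom.comp_apply, this, hπa, map_add, add_sub_cancel_left]
    exact Ideal.mem_map_of_mem _ hw
  -- uniqueness of the coefficient field at level 2
  have huniq : σ = πa.comp σ' := by
    refine Algebra.FormallyUnramified.comp_injective
      ((𝔪).map (Ideal.Quotient.mk (𝔪 ^ 2))) map_sq_eq_bot' ?_
    apply AlgHom.ext
    intro d
    obtain ⟨x, rfl⟩ : ∃ x : R, residue R x = d := Ideal.Quotient.mk_surjective d
    simp only [AlgHom.comp_apply, Ideal.Quotient.mkₐ_eq_mk]
    rw [Ideal.Quotient.eq]
    have := Ideal.sub_mem _ (hσ x) (hσ'' x)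
    simpa using this
  -- a representative at level `m+1`
  obtain ⟨s', hs'⟩ : ∃ s' : R, Ideal.Quotient.mk (𝔪 ^ (m + 1)) s' = σ' c :=
    Ideal.Quotient.mk_surjective _
  have h2 : Ideal.Quotient.mk (𝔪 ^ 2) s = Ideal.Quotient.mk (𝔪 ^ 2) s' := by
    rw [hs, huniq, AlgHom.comp_apply, ← hs', hπa]
  have hss' : s - s' ∈ (𝔪 : Ideal R) ^ 2 := Ideal.Quotient.eq.mp h2
  have hEss' : E (s - s') ∈ (𝔪 : Ideal R) ^ (m + 1) := deriv_sq_mem' E hE _ hss'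
  -- the `x ↦ x + E x` trick at level `m+1`
  let ψ1 : (R ⧸ 𝔪 ^ (m + 1)) →ₐ[k₀] R ⧸ (𝔪 ^ (m + 1)) :=
    Ideal.Quotient.liftₐ (𝔪 ^ (m + 1)) (psi1 E m hm hE) (by
      intro x hx
      rw [psi1_apply, Ideal.Quotient.eq_zero_iff_mem]
      exact Ideal.add_mem _ hx (deriv_pow_succ_mem' E hm hE x hx))
  have hψ1 : ∀ x : R, ψ1 (Ideal.Quotient.mk (𝔪 ^ (m + 1)) x)
      = Ideal.Quotient.mk (𝔪 ^ (m + 1)) (x + E x) := by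
    intro x
    rw [Ideal.Quotient.liftₐ_apply]
    rfl
  let I' : Ideal (R ⧸ 𝔪 ^ (m + 1)) := (𝔪 ^ m).map (Ideal.Quotient.mk (𝔪 ^ (m + 1)))
  have hI' : I' ^ 2 = ⊥ := by
    refine le_antisymm ?_ bot_le
    show ((𝔪 ^ m).map (Ideal.Quotient.mk (𝔪 ^ (m + 1)))) ^ 2 ≤ ⊥
    rw [← Ideal.map_pow, ← pow_mul]
    calc ((𝔪 : Ideal R) ^ (m * 2)).map (Ideal.Quotient.mk (𝔪 ^ (m + 1)))
        ≤ ((𝔪 : Ideal R) ^ (m + 1)).map (Ideal.Quotient.mk (𝔪 ^ (m + 1))) :=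
          Ideal.map_mono (Ideal.pow_le_pow_right (by omega))
      _ = ⊥ := Ideal.map_quotient_self _
  have key2 : (Ideal.Quotient.mkₐ k₀ I').comp (ψ1.comp σ')
      = (Ideal.Quotient.mkₐ k₀ I').comp σ' := by
    apply AlgHom.ext
    intro d
    obtain ⟨x, rfl⟩ : ∃ x : R, residue R x = d := Ideal.Quotient.mk_surjective d
    simp only [AlgHom.comp_apply, Ideal.Quotient.mkₐ_eq_mk]
    rw [Ideal.Quotient.eq]
    obtain ⟨w, hw, hw'⟩ := mem_map_iff'.mp (hσ' x)
    have hxw : σ' (residue R x) = Ideal.Quotient.mk (𝔪 ^ (m + 1)) (x + w) := by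
      rw [map_add, hw']; ring
    rw [hxw, hψ1]
    have : Ideal.Quotient.mk (𝔪 ^ (m + 1)) (x + w + E (x + w))
        - Ideal.Quotient.mk (𝔪 ^ (m + 1)) (x + w)
        = Ideal.Quotient.mk (𝔪 ^ (m + 1)) (E (x + w)) := by
      rw [← map_sub]; ring_nf
    rw [this]
    exact Ideal.mem_map_of_mem _ (hE (x + w))
  have heq2 : ψ1.comp σ' = σ' :=
    Algebra.FormallyUnramified.comp_injective I' hI' key2
  have hc : ψ1 (σ' c) = σ' c := by rw [← AlgHom.comp_apply, heq2]
  rw [← hs', hψ1] at hc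
  have : Ideal.Quotient.mk (𝔪 ^ (m + 1)) (E s') = 0 := by
    have := sub_eq_zero.mpr hc
    rw [← map_sub] at this
    rw [show s' + E s' - s' = E s' by ring] at this
    exact this
  have hEs' : E s' ∈ (𝔪 : Ideal R) ^ (m + 1) := Ideal.Quotient.eq_zero_iff_mem.mp this
  have : E s = E (s - s') + E s' := by rw [map_sub]; ring
  rw [this]
  exact Ideal.add_mem _ hEss' hEs'

/-- Spanning: if the matrix `(res (D i (b j)))` is invertible over the residue field and
`b j ∈ 𝔪`, then the `b j` generate `𝔪` modulo `𝔪²`. -/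
lemma span_mod_sq' {n : ℕ} (X : Fin n → R) (hX : Ideal.span (Set.range X) = 𝔪)
    (b : Fin n → R) (hb : ∀ j, b j ∈ (𝔪 : Ideal R))
    (D : Fin n → Derivation k₀ R R)
    (hDdet : (Matrix.of fun i j => residue R (D i (b j))).det ≠ 0) :
    ∀ y ∈ (𝔪 : Ideal R), ∃ r : Fin n → R, y - ∑ j, r j * b j ∈ (𝔪 : Ideal R) ^ 2 := by
  classical
  have hXm : ∀ t, X t ∈ (𝔪 : Ideal R) := fun t =>
    hX ▸ Ideal.subset_span (Set.mem_range_self t)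
  -- write each `b j` in terms of the `X t`
  have hbX : ∀ j, ∃ g : Fin n → R, ∑ t, g t * X t = b j := by
    intro j
    have : b j ∈ Ideal.span (Set.range X) := hX.symm ▸ hb j
    obtain ⟨g, hg⟩ := Ideal.mem_span_range_iff_exists_fun.mp this
    exact ⟨g, by simpa [smul_eq_mul] using hg⟩
  choose g hg using hbX
  set kB : Matrix (Fin n) (Fin n) k := Matrix.of fun i t => residue R (D i (X t)) with hkB
  set kG : Matrix (Fin n) (Fin n) k := Matrix.of fun j t => residue R (g j t) with hkG
  -- the key matrix identity
  have hmat : (Matrix.of fun i j => residue R (D i (b j))) = kB * kGᵀ := by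
    ext i j
    have h1 : D i (b j) = ∑ t, (g j t * D i (X t) + X t * D i (g j t)) := by
      rw [← hg j, map_sum]
      congr 1
      ext t
      rw [(D i).leibniz]
      simp only [smul_eq_mul]
    have h2 : residue R (D i (b j)) = ∑ t, residue R (g j t) * residue R (D i (X t)) := by
      rw [h1, map_sum]
      congr 1
      ext t
      rw [_root_.map_add, _root_.map_mul, _root_.map_mul]
      have : residue R (X t) = 0 := by
        show Ideal.Quotient.mk 𝔪 (X t) = 0
        rw [Ideal.Quotient.eq_zero_iff_mem]; exact hXm t
      rw [this, zero_mul, add_zero]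
    rw [Matrix.mul_apply]
    simpa [hkB, hkG, Matrix.of_apply, mul_comm] using h2
  have hGdet : IsUnit kG.det := by
    have := hDdet
    rw [hmat, Matrix.det_mul, Matrix.det_transpose] at this
    exact (isUnit_iff_ne_zero.mpr (right_ne_zero_of_mul this))
  set kH := kG⁻¹ with hkH
  have hHG : kH * kG = 1 := Matrix.nonsing_inv_mul kG hGdet
  -- lift `kH` to `R`
  have hh : ∀ t j, ∃ z : R, residue R z = kH t j := fun t j =>
    Ideal.Quotient.mk_surjective _
  choose h hh' using hh
  -- each `X t` is a combination of the `b j` modulo `𝔪²`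
  have hXb : ∀ t, X t - ∑ j, h t j * b j ∈ (𝔪 : Ideal R) ^ 2 := by
    intro t
    have e1 : ∑ j, h t j * b j = ∑ u, (∑ j, h t j * g j u) * X u := by
      calc ∑ j, h t j * b j = ∑ j, ∑ u, h t j * g j u * X u := by
            refine Finset.sum_congr rfl fun j _ => ?_
            rw [← hg j, Finset.mul_sum]
            exact Finset.sum_congr rfl fun u _ => by ring
        _ = ∑ u, ∑ j, h t j * g j u * X u := Finset.sum_comm
        _ = ∑ u, (∑ j, h t j * g j u) * X u := by
            exact Finset.sum_congr rfl fun u _ => (Finset.sum_mul _ _ _).symm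
    have hXt : X t = ∑ u, (if t = u then (1 : R) else 0) * X u := by
      simp [ite_mul, Finset.sum_ite_eq]
    have e2 : X t - ∑ j, h t j * b j
        = ∑ u, ((if t = u then (1 : R) else 0) - ∑ j, h t j * g j u) * X u := by
      calc X t - ∑ j, h t j * b j
          = ∑ u, (if t = u then (1 : R) else 0) * X u
            - ∑ u, (∑ j, h t j * g j u) * X u := by rw [e1, ← hXt]
        _ = ∑ u, ((if t = u then (1 : R) else 0) - ∑ j, h t j * g j u) * X u := by
            rw [← Finset.sum_sub_distrib]
            exact Finset.sum_congr rfl fun u _ => by ring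
    rw [e2]
    refine Submodule.sum_mem _ fun u _ => ?_
    have hcoeff : ((if t = u then (1 : R) else 0) - ∑ j, h t j * g j u) ∈ (𝔪 : Ideal R) := by
      have hres : residue R ((if t = u then (1 : R) else 0) - ∑ j, h t j * g j u) = 0 := by
        rw [map_sub, map_sum]
        have h1 : residue R (if t = u then (1 : R) else 0)
            = (1 : Matrix (Fin n) (Fin n) k) t u := by
          rw [Matrix.one_apply]
          split <;> simp
        have h2 : ∑ j, residue R (h t j * g j u) = (kH * kG) t u := by
          rw [Matrix.mul_apply]
          exact Finset.sum_congr rfl fun j _ => by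
            rw [_root_.map_mul, hh']
            rfl
        rw [h1, h2, hHG, sub_self]
      exact Ideal.Quotient.eq_zero_iff_mem.mp hres
    rw [pow_two]
    exact Ideal.mul_mem_mul hcoeff (hXm u)
  -- conclude
  intro y hy
  obtain ⟨q, hq⟩ := Ideal.mem_span_range_iff_exists_fun.mp (hX.symm ▸ hy)
  refine ⟨fun j => ∑ t, q t * h t j, ?_⟩
  have e3 : y - ∑ j, (∑ t, q t * h t j) * b j
      = ∑ t, q t * (X t - ∑ j, h t j * b j) := by
    calc y - ∑ j, (∑ t, q t * h t j) * b j
        = ∑ t, q t * X t - ∑ t, ∑ j, q t * (h t j * b j) := by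
          rw [← hq]
          congr 1
          calc ∑ j, (∑ t, q t * h t j) * b j
              = ∑ j, ∑ t, q t * (h t j * b j) := by
                refine Finset.sum_congr rfl fun j _ => ?_
                rw [Finset.sum_mul]
                exact Finset.sum_congr rfl fun t _ => by ring
            _ = ∑ t, ∑ j, q t * (h t j * b j) := Finset.sum_comm
      _ = ∑ t, q t * (X t - ∑ j, h t j * b j) := by
          rw [← Finset.sum_sub_distrib]
          exact Finset.sum_congr rfl fun t _ => by rw [mul_sub, Finset.mul_sum]
  rw [e3]
  exact Submodule.sum_mem _ fun t _ => Ideal.mul_mem_left _ _ (hXb t)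

/-- Key lemma: a derivation killing all the `a j` is zero. -/
lemma deriv_eq_zero' [IsNoetherianRing R]
    [Algebra.FormallyUnramified k₀ k] [Algebra.FormallySmooth k₀ k]
    {n : ℕ} (X : Fin n → R) (hX : Ideal.span (Set.range X) = 𝔪)
    (D : Fin n → Derivation k₀ R R) (a : Fin n → R)
    (hdet : (Matrix.of fun i j => D i (a j)).det ∉ (𝔪 : Ideal R))
    (E : Derivation k₀ R R) (hEa : ∀ j, E (a j) = 0) : E = 0 := by
  obtain ⟨σ, hσ⟩ := exists_section' (R := R) (k₀ := k₀) 2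
  have hsj : ∀ j, ∃ s : R, Ideal.Quotient.mk (𝔪 ^ 2) s = σ (residue R (a j)) := fun j =>
    Ideal.Quotient.mk_surjective _
  choose s hs using hsj
  have hsub : ∀ x x' : R, Ideal.Quotient.mk (𝔪 ^ 2) x' = σ (residue R x) → x - x' ∈ (𝔪 : Ideal R) := by
    intro x x' hx'
    obtain ⟨w, hw, hw'⟩ := mem_map_iff'.mp (hσ x)
    have h1 : Ideal.Quotient.mk (𝔪 ^ 2) x' = Ideal.Quotient.mk (𝔪 ^ 2) (x + w) := by
      rw [hx', map_add, hw']; ring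
    have h2 : x' - (x + w) ∈ (𝔪 : Ideal R) ^ 2 := Ideal.Quotient.eq.mp h1
    have h3 : x - x' = -(x' - (x + w)) - w := by ring
    rw [h3]
    exact Ideal.sub_mem _ (neg_mem (Ideal.pow_le_self two_ne_zero h2)) hw
  set b : Fin n → R := fun j => a j - s j with hbdef
  have hb : ∀ j, b j ∈ (𝔪 : Ideal R) := fun j => hsub (a j) (s j) (hs j)
  have htriv : ∀ (F : Derivation k₀ R R) (x : R), F x ∈ (𝔪 : Ideal R) ^ 0 := by
    intro F x
    rw [pow_zero, Ideal.one_eq_top]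
    exact Submodule.mem_top
  have hDs : ∀ (F : Derivation k₀ R R) (m : ℕ), (∀ x, F x ∈ (𝔪 : Ideal R) ^ m) →
      ∀ j, F (s j) ∈ (𝔪 : Ideal R) ^ (m + 1) :=
    fun F m hF j => deriv_section_mem' F m hF σ hσ (hs j)
  have hDdet : (Matrix.of fun i j => residue R (D i (b j))).det ≠ 0 := by
    have hentry : ∀ i j, residue R (D i (b j)) = residue R (D i (a j)) := by
      intro i j
      have h1 : D i (s j) ∈ (𝔪 : Ideal R) := by
        simpa [pow_one] using hDs (D i) 0 (htriv (D i)) j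
      have h2 : residue R (D i (s j)) = 0 := Ideal.Quotient.eq_zero_iff_mem.mpr h1
      show residue R (D i (a j - s j)) = residue R (D i (a j))
      rw [map_sub, map_sub, h2, sub_zero]
    have hM : (Matrix.of fun i j => residue R (D i (b j)))
        = (Matrix.of fun i j => D i (a j)).map (residue R) := by
      ext i j
      exact hentry i j
    rw [hM]
    have hd : ((Matrix.of fun i j => D i (a j)).map (residue R)).det
        = residue R ((Matrix.of fun i j => D i (a j)).det) := by
      rw [RingHom.map_det, RingHom.mapMatrix_apply]
    rw [hd]
    intro h0
    exact hdet (Ideal.Quotient.eq_zero_iff_mem.mp h0)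
  have hspan := span_mod_sq' X hX b hb D hDdet
  have key : ∀ (m : ℕ) (x : R), E x ∈ (𝔪 : Ideal R) ^ m := by
    intro m
    induction m with
    | zero => exact htriv E
    | succ m IH =>
      intro x
      obtain ⟨s₀, hs₀⟩ : ∃ s₀ : R, Ideal.Quotient.mk (𝔪 ^ 2) s₀ = σ (residue R x) :=
        Ideal.Quotient.mk_surjective _
      have hEs₀ : E s₀ ∈ (𝔪 : Ideal R) ^ (m + 1) := deriv_section_mem' E m IH σ hσ hs₀
      have hy : x - s₀ ∈ (𝔪 : Ideal R) := hsub x s₀ hs₀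
      obtain ⟨r, hr⟩ := hspan (x - s₀) hy
      have hxdec : x = s₀ + (∑ j, r j * b j) + (x - s₀ - ∑ j, r j * b j) := by ring
      have hax : E x = E s₀ + (∑ j, E (r j * b j)) + E (x - s₀ - ∑ j, r j * b j) := by
        conv_lhs => rw [hxdec]
        rw [E.map_add, E.map_add, map_sum]
      have h1 : ∀ j, E (r j * b j) ∈ (𝔪 : Ideal R) ^ (m + 1) := by
        intro j
        rw [E.leibniz]
        refine Submodule.add_mem _ ?_ ?_
        · have hEb : E (b j) = -E (s j) := by
            show E (a j - s j) = -E (s j)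
            rw [map_sub, hEa j, zero_sub]
          rw [smul_eq_mul, hEb]
          exact Ideal.mul_mem_left _ _ (neg_mem (hDs E m IH j))
        · rw [smul_eq_mul]
          have := Ideal.mul_mem_mul (hb j) (IH (r j))
          rwa [← pow_succ'] at this
      have h2 : E (x - s₀ - ∑ j, r j * b j) ∈ (𝔪 : Ideal R) ^ (m + 1) :=
        deriv_sq_mem' E IH _ hr
      rw [hax]
      exact add_mem (add_mem hEs₀ (Submodule.sum_mem _ fun j _ => h1 j)) h2
  apply Derivation.ext
  intro x
  have hmem : E x ∈ ⨅ m : ℕ, (𝔪 : Ideal R) ^ m :=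
    (Submodule.mem_iInf _).mpr fun m => key m x
  rw [Ideal.iInf_pow_eq_bot_of_isLocalRing _
    (IsLocalRing.maximalIdeal.isMaximal R).ne_top] at hmem
  simpa using hmem

lemma derivation_sum_apply {ι : Type*} (t : Finset ι) (f : ι → Derivation k₀ R R) (x : R) :
    (∑ i ∈ t, f i) x = ∑ i ∈ t, f i x := by
  classical
  induction t using Finset.induction_on with
  | empty => simp
  | insert _ _ hm ih => rw [Finset.sum_insert hm, Finset.sum_insert hm, Derivation.add_apply, ih]

end NomuraAux

/-- part of Nomura's theorem: let `(R,𝔪,k)` be a noetherian regular local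
ring of dimension `n ≥ 1` containing a field, with regular system of parameters
`X_1,…,X_n` and quasi-coefficient field `k₀`. If there are `k₀`-derivations `D_1,…,D_n`
of `R` and `a_1,…,a_n ∈ R` with `det(D_i(a_j)) ∉ 𝔪`, then `Der_{k₀}(R)` is a free
`R`-module of rank `n` with basis `D_1,…,D_n`. -/
theorem derivations_free_of_det_unit
    {R k₀ : Type u} [CommRing R] [IsLocalRing R] [IsNoetherianRing R]
    [Field k₀] [Algebra k₀ R]
    [Algebra k₀ (IsLocalRing.ResidueField R)]
    [IsScalarTower k₀ R (IsLocalRing.ResidueField R)]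
    (hqc : Algebra.FormallyEtale k₀ (IsLocalRing.ResidueField R))
    (n : ℕ) (hn : 1 ≤ n) (X : Fin n → R)
    (hX : Ideal.span (Set.range X) = IsLocalRing.maximalIdeal R)
    (hdim : ringKrullDim R = n)
    (D : Fin n → Derivation k₀ R R) (a : Fin n → R)
    (hdet : (Matrix.of fun i j => D i (a j)).det ∉ IsLocalRing.maximalIdeal R) :
    ∃ b : Module.Basis (Fin n) R (Derivation k₀ R R), ∀ i, b i = D i := by
  classical
  haveI : Algebra.FormallyEtale k₀ (IsLocalRing.ResidueField R) := hqc
  set M : Matrix (Fin n) (Fin n) R := Matrix.of fun i j => D i (a j) with hM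
  have hMdet : IsUnit M.det := by
    by_contra h
    exact hdet ((IsLocalRing.mem_maximalIdeal _).mpr h)
  set N := M⁻¹ with hN
  have hMN : M * N = 1 := Matrix.mul_nonsing_inv M hMdet
  have hNM : N * M = 1 := Matrix.nonsing_inv_mul M hMdet
  -- evaluation of a linear combination of the `D i` at `a j`
  have heval : ∀ (g : Fin n → R) (j : Fin n),
      (∑ i, g i • D i) (a j) = Matrix.vecMul g M j := by
    intro g j
    rw [derivation_sum_apply]
    simp only [Derivation.smul_apply, smul_eq_mul]
    rfl
  -- linear independence
  have hli : LinearIndependent R D := by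
    rw [Fintype.linearIndependent_iff]
    intro g hg
    have hval : Matrix.vecMul g M = 0 := by
      funext j
      rw [← heval g j, hg]
      rfl
    have hg0 : g = 0 := by
      have h1 : Matrix.vecMul (Matrix.vecMul g M) N = Matrix.vecMul g (M * N) :=
        Matrix.vecMul_vecMul g M N
      rw [hval, hMN, Matrix.vecMul_one, Matrix.zero_vecMul] at h1
      exact h1.symm
    intro i
    rw [hg0]
    rfl
  -- spanning
  have hsp : ∀ E : Derivation k₀ R R, E ∈ Submodule.span R (Set.range D) := by
    intro E
    set v : Fin n → R := fun j => E (a j) with hv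
    set g : Fin n → R := Matrix.vecMul v N with hgdef
    have hgM : Matrix.vecMul g M = v := by
      rw [hgdef, Matrix.vecMul_vecMul, hNM, Matrix.vecMul_one]
    have hEg : E = ∑ i, g i • D i := by
      have hzero : ∀ j, (E - ∑ i, g i • D i) (a j) = 0 := by
        intro j
        rw [Derivation.sub_apply, heval g j, hgM]
        exact sub_self _
      have h0 := deriv_eq_zero' (R := R) (k₀ := k₀) X hX D a hdet
        (E - ∑ i, g i • D i) hzero
      exact sub_eq_zero.mp h0
    rw [hEg]
    exact Submodule.sum_mem _ fun i _ =>
      Submodule.smul_mem _ _ (Submodule.subset_span (Set.mem_range_self i))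
  have hsp' : ⊤ ≤ Submodule.span R (Set.range D) := fun E _ => hsp E
  exact ⟨Module.Basis.mk hli hsp', fun i => Module.Basis.mk_apply hli hsp' i⟩
end
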